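/- (Anytime regret bound for SF-OGD.) Let α ∈ (0,1), D > 0, and let S_1, …, S_T ∈ [0, D]. Run SF-OGD with learning rate η = D/√3 and any initialization ŝ_1 ∈ [0, D], producing iterates ŝ_t with err_t = 1{ŝ_t < S_t}. Then for every t ∈ {1, …, T}, the regret Reg(t) := Σ_{τ=1}^{t} ℓ_{1−α}(S_τ, ŝ_τ) − inf_{s ∈ ℝ} Σ_{τ=1}^{t} ℓ_{1−α}(S_τ, s) satisfies Reg(t) ≤ (√3 + 1) · D · sqrt(Σ_{τ=1}^{t} (err_τ − α)²) ≤ (√3 + 1) · D · √t. -/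

import Mathlib

/-- Standard "sum of ratios" lemma: `Σ aᵢ/√Aᵢ ≤ 2√Aₙ` where `Aᵢ` are partial sums. -/
lemma ratio_sum_le (a : ℕ → ℝ) (ha : ∀ i, 0 ≤ a i) : ∀ n : ℕ,
    ∑ i ∈ Finset.Icc 1 n, a i / Real.sqrt (∑ j ∈ Finset.Icc 1 i, a j)
      ≤ 2 * Real.sqrt (∑ i ∈ Finset.Icc 1 n, a i) := by
  intro n
  induction n with
  | zero => simp
  | succ n ih =>
    rw [Finset.sum_Icc_succ_top (by omega), Finset.sum_Icc_succ_top (by omega : 1 ≤ n+1)]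
    set A := ∑ i ∈ Finset.Icc 1 n, a i with hA
    have hA0 : 0 ≤ A := Finset.sum_nonneg fun i _ => ha i
    have hA'0 : 0 ≤ A + a (n+1) := by linarith [ha (n+1)]
    rcases eq_or_lt_of_le hA'0 with h | h
    · have h1 : a (n+1) = 0 := by linarith [ha (n+1)]
      have h2 : A = 0 := by linarith
      have ih' : ∑ i ∈ Finset.Icc 1 n, a i / Real.sqrt (∑ j ∈ Finset.Icc 1 i, a j) ≤ 0 := by
        simpa [h2] using ih
      simp [h1, ← h]
      linarith
    · have hy : Real.sqrt A ≤ Real.sqrt (A + a (n+1)) := Real.sqrt_le_sqrt (by linarith [ha (n+1)])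
      have hx : 0 < Real.sqrt (A + a (n+1)) := Real.sqrt_pos.mpr h
      have hxs : Real.sqrt (A + a (n+1)) ^ 2 = A + a (n+1) := Real.sq_sqrt hA'0
      have hys : Real.sqrt A ^ 2 = A := Real.sq_sqrt hA0
      have key : a (n+1) / Real.sqrt (A + a (n+1)) ≤
          2 * Real.sqrt (A + a (n+1)) - 2 * Real.sqrt A := by
        rw [div_le_iff₀ hx]
        nlinarith [sq_nonneg (Real.sqrt (A + a (n+1)) - Real.sqrt A), Real.sqrt_nonneg A]
      linarith [ih]

/-- The `(1-α)`-pinball (quantile) loss `ℓ_{1-α}(S, s)`. -/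
noncomputable def pinball (α S s : ℝ) : ℝ := max ((1 - α) * (S - s)) (α * (s - S))

/-- Subgradient inequality for the pinball loss. -/
lemma pinball_subgrad (α S x s e : ℝ) (h0 : 0 ≤ α) (h1 : α ≤ 1)
    (he : e = if x < S then (1:ℝ) else 0) :
    pinball α S x - pinball α S s ≤ (α - e) * (x - s) := by
  unfold pinball
  rcases lt_or_ge x S with h | h
  · rw [if_pos h] at he
    subst he
    have hx : max ((1 - α) * (S - x)) (α * (x - S)) = (1 - α) * (S - x) := by
      apply max_eq_left; nlinarith
    rw [hx]
    have := le_max_left ((1 - α) * (S - s)) (α * (s - S))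
    nlinarith [this]
  · rw [if_neg (not_lt.mpr h)] at he
    subst he
    have hx : max ((1 - α) * (S - x)) (α * (x - S)) = α * (x - S) := by
      apply max_eq_right; nlinarith
    rw [hx]
    have := le_max_right ((1 - α) * (S - s)) (α * (s - S))
    nlinarith [this]

/-- Clamping the comparator to `[0, D]` does not increase the pinball loss. -/
lemma pinball_clamp (α S s D : ℝ) (h0 : 0 ≤ α) (h1 : α ≤ 1) (hS0 : 0 ≤ S) (hSD : S ≤ D) :
    pinball α S (max 0 (min s D)) ≤ pinball α S s := by
  rcases lt_or_ge s 0 with hs | hs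
  · have hc : max 0 (min s D) = 0 := by
      rw [min_eq_left (by linarith), max_eq_left (by linarith)]
    rw [hc]
    unfold pinball
    have hl : max ((1 - α) * (S - 0)) (α * (0 - S)) = (1 - α) * (S - 0) := by
      apply max_eq_left; nlinarith
    rw [hl]
    exact le_max_of_le_left (by nlinarith)
  · rcases le_total s D with hsD | hsD
    · have hc : max 0 (min s D) = s := by
        rw [min_eq_left hsD, max_eq_right hs]
      rw [hc]
    · have hc : max 0 (min s D) = D := by
        rw [min_eq_right hsD, max_eq_right (by linarith)]
      rw [hc]
      unfold pinball
      have hl : max ((1 - α) * (S - D)) (α * (D - S)) = α * (D - S) := by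
        apply max_eq_right; nlinarith
      rw [hl]
      exact le_max_of_le_right (by nlinarith)

/-- One-step OGD identity (pure algebra). -/
lemma step_id (η r g x s : ℝ) (hη : 0 < η) (hr : 0 < r) :
    (-g) * (x - s) = r / (2*η) * ((x-s)^2 - (x + η*g/r - s)^2) + (η/2) * (g^2/r) := by
  field_simp
  ring

set_option maxHeartbeats 1000000 in
/-- Anytime regret bound for SF-OGD with learning rate `η = D/√3` and initialization in
`[0, D]`: for every `t ∈ {1, …, T}`, the regret on the pinball losses is at most
`(√3 + 1) D sqrt(Σ_{τ≤t} (err_τ - α)²) ≤ (√3 + 1) D √t`. -/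
theorem sfogd_anytime_regret (α D : ℝ) (hα : α ∈ Set.Ioo (0:ℝ) 1) (hD : 0 < D)
    (T : ℕ) (S : ℕ → ℝ) (hS : ∀ t ∈ Finset.Icc 1 T, S t ∈ Set.Icc 0 D)
    (shat err : ℕ → ℝ)
    (hinit : shat 1 ∈ Set.Icc 0 D)
    (herr : ∀ t, 1 ≤ t → t ≤ T → err t = if shat t < S t then (1:ℝ) else 0)
    (hrec : ∀ t, 1 ≤ t → t < T →
      shat (t + 1) = shat t + (D / Real.sqrt 3) * (err t - α) /
        Real.sqrt (∑ τ ∈ Finset.Icc 1 t, (err τ - α) ^ 2)) :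
    ∀ t ∈ Finset.Icc 1 T,
      ((∑ τ ∈ Finset.Icc 1 t, pinball α (S τ) (shat τ)) -
          ⨅ s : ℝ, ∑ τ ∈ Finset.Icc 1 t, pinball α (S τ) s)
        ≤ (Real.sqrt 3 + 1) * D * Real.sqrt (∑ τ ∈ Finset.Icc 1 t, (err τ - α) ^ 2)
      ∧ (Real.sqrt 3 + 1) * D * Real.sqrt (∑ τ ∈ Finset.Icc 1 t, (err τ - α) ^ 2)
        ≤ (Real.sqrt 3 + 1) * D * Real.sqrt t := by
  obtain ⟨hα0, hα1⟩ := hα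
  intro t ht
  obtain ⟨ht1, htT⟩ := Finset.mem_Icc.mp ht
  -- abbreviations (opaque constants to avoid definitional unfolding)
  obtain ⟨s3, hs3def⟩ : ∃ x : ℝ, x = Real.sqrt 3 := ⟨_, rfl⟩
  rw [← hs3def]
  rw [← hs3def] at hrec
  have hs3 : 0 < s3 := hs3def ▸ Real.sqrt_pos.mpr (by norm_num)
  have hs3sq : s3 ^ 2 = 3 := hs3def ▸ Real.sq_sqrt (by norm_num)
  obtain ⟨η, hηdef⟩ : ∃ x : ℝ, x = D / s3 := ⟨_, rfl⟩
  rw [← hηdef] at hrec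
  have hη : 0 < η := hηdef ▸ div_pos hD hs3
  -- partial sums of squared gradients
  obtain ⟨G, hGa⟩ : ∃ G : ℕ → ℝ, ∀ n, G n = ∑ τ ∈ Finset.Icc 1 n, (err τ - α) ^ 2 :=
    ⟨_, fun n => rfl⟩
  simp only [← hGa] at hrec
  rw [← hGa t]
  have hG0 : ∀ n, 0 ≤ G n := fun n => (hGa n) ▸ Finset.sum_nonneg fun i _ => sq_nonneg _
  have hGmono : ∀ m n : ℕ, m ≤ n → G m ≤ G n := by
    intro m n hmn
    rw [hGa m, hGa n]
    exact Finset.sum_le_sum_of_subset_of_nonneg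
      (Finset.Icc_subset_Icc le_rfl hmn) (fun i _ _ => sq_nonneg _)
  have herr01 : ∀ τ, 1 ≤ τ → τ ≤ T → err τ = 0 ∨ err τ = 1 := by
    intro τ h1 h2
    rw [herr τ h1 h2]
    split <;> simp
  have hGpos : ∀ n, 1 ≤ n → n ≤ T → 0 < G n := by
    intro n h1 h2
    have h1T : (1:ℕ) ≤ T := le_trans ht1 htT
    have hp : 0 < (err 1 - α) ^ 2 := by
      rcases herr01 1 le_rfl h1T with h | h <;> rw [h] <;> nlinarith
    calc (0:ℝ) < (err 1 - α) ^ 2 := hp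
      _ ≤ G n := (hGa n) ▸ Finset.single_le_sum (f := fun τ => (err τ - α) ^ 2)
          (fun i _ => sq_nonneg _) (Finset.mem_Icc.mpr ⟨le_rfl, h1⟩)
  have hsqle : ∀ τ : ℕ, 1 ≤ τ → (err τ - α) ^ 2 ≤ G τ :=
    fun τ h1 => (hGa τ) ▸ Finset.single_le_sum (f := fun i => (err i - α) ^ 2)
      (fun i _ => sq_nonneg _) (Finset.mem_Icc.mpr ⟨h1, le_rfl⟩)
  -- the iterates stay in [-η, D + η]
  have hdrift : ∀ τ, 1 ≤ τ → τ ≤ T → -η ≤ shat τ ∧ shat τ ≤ D + η := by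
    intro τ hτ1
    induction τ, hτ1 using Nat.le_induction with
    | base =>
      intro _
      obtain ⟨h1, h2⟩ := hinit
      constructor <;> linarith
    | succ u hu ih =>
      intro huT
      have huT' : u < T := by omega
      obtain ⟨ih1, ih2⟩ := ih (by omega)
      have hr : 0 < Real.sqrt (G u) := Real.sqrt_pos.mpr (hGpos u hu (by omega))
      have habs : |err u - α| ≤ Real.sqrt (G u) := by
        rw [← Real.sqrt_sq_eq_abs]
        exact Real.sqrt_le_sqrt (hsqle u hu)
      obtain ⟨habs1, habs2⟩ := abs_le.mp habs
      have hrw : shat (u + 1) = shat u + η * (err u - α) / Real.sqrt (G u) := hrec u hu huT'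
      have hSu := hS u (Finset.mem_Icc.mpr ⟨hu, by omega⟩)
      obtain ⟨hS0, hSD⟩ := hSu
      have hif := herr u hu (by omega)
      have hstep_le : η * (err u - α) / Real.sqrt (G u) ≤ η := by
        rw [div_le_iff₀ hr]; nlinarith
      have hstep_ge : -η ≤ η * (err u - α) / Real.sqrt (G u) := by
        rw [le_div_iff₀ hr]; nlinarith
      by_cases hlt : shat u < S u
      · have he1 : err u = 1 := by rw [hif, if_pos hlt]
        have hpos : 0 ≤ η * (err u - α) / Real.sqrt (G u) := by
          apply div_nonneg _ hr.le
          rw [he1]; nlinarith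
        constructor
        · rw [hrw]; linarith
        · rw [hrw]; linarith
      · have he0 : err u = 0 := by rw [hif, if_neg hlt]
        have hneg : η * (err u - α) / Real.sqrt (G u) ≤ 0 := by
          apply div_nonpos_of_nonpos_of_nonneg _ hr.le
          rw [he0]; nlinarith
        push_neg at hlt
        constructor
        · rw [hrw]; linarith
        · rw [hrw]; linarith
  -- comparator bound for fixed s ∈ [0, D]
  obtain ⟨M, hMdef⟩ : ∃ x : ℝ, x = (D + η) ^ 2 := ⟨_, rfl⟩
  have key : ∀ s ∈ Set.Icc (0:ℝ) D,
      (∑ τ ∈ Finset.Icc 1 t, pinball α (S τ) (shat τ)) -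
        (∑ τ ∈ Finset.Icc 1 t, pinball α (S τ) s)
      ≤ (s3 + 1) * D * Real.sqrt (G t) := by
    intro s hs
    obtain ⟨hs0, hsD⟩ := hs
    -- virtual next iterate
    obtain ⟨N, hNa⟩ : ∃ N : ℕ → ℝ, ∀ τ, N τ = shat τ + η * (err τ - α) / Real.sqrt (G τ) :=
      ⟨_, fun τ => rfl⟩
    have hN : ∀ τ, 1 ≤ τ → τ < T → shat (τ + 1) = N τ := by
      intro τ h1 h2
      rw [hNa τ]
      exact hrec τ h1 h2
    -- per-step identity
    have hid : ∀ τ, 1 ≤ τ → τ ≤ T →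
        (α - err τ) * (shat τ - s) =
          Real.sqrt (G τ) / (2 * η) * ((shat τ - s) ^ 2 - (N τ - s) ^ 2)
            + (η / 2) * ((err τ - α) ^ 2 / Real.sqrt (G τ)) := by
      intro τ h1 h2
      have hr : 0 < Real.sqrt (G τ) := Real.sqrt_pos.mpr (hGpos τ h1 h2)
      rw [hNa τ]
      have hrw : (α - err τ) * (shat τ - s) = (-(err τ - α)) * (shat τ - s) := by ring
      rw [hrw]
      exact step_id η (Real.sqrt (G τ)) (err τ - α) (shat τ) s hη hr
    -- squared distance to comparator is at most M
    have hsqM : ∀ τ, 1 ≤ τ → τ ≤ T → (shat τ - s) ^ 2 ≤ M := by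
      intro τ h1 h2
      obtain ⟨hd1, hd2⟩ := hdrift τ h1 h2
      rw [hMdef]; nlinarith
    -- main induction
    have main : ∀ u, 1 ≤ u → u ≤ t →
        (∑ τ ∈ Finset.Icc 1 u, (α - err τ) * (shat τ - s))
          + Real.sqrt (G u) * (N u - s) ^ 2 / (2 * η)
          - (η / 2) * ∑ τ ∈ Finset.Icc 1 u, (err τ - α) ^ 2 / Real.sqrt (G τ)
        ≤ Real.sqrt (G u) * M / (2 * η) := by
      intro u hu
      induction u, hu using Nat.le_induction with
      | base =>
        intro _
        have h1T : (1:ℕ) ≤ T := le_trans ht1 htT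
        have e1 := hid 1 le_rfl h1T
        have hsq := hsqM 1 le_rfl h1T
        have hr : (0:ℝ) ≤ Real.sqrt (G 1) := Real.sqrt_nonneg _
        simp only [Finset.Icc_self, Finset.sum_singleton]
        have heq : (α - err 1) * (shat 1 - s)
            + Real.sqrt (G 1) * (N 1 - s) ^ 2 / (2 * η)
            - (η / 2) * ((err 1 - α) ^ 2 / Real.sqrt (G 1))
            = Real.sqrt (G 1) * (shat 1 - s) ^ 2 / (2 * η) := by
          rw [e1]; ring
        rw [heq]
        gcongr
      | succ u hu ih =>
        intro hut
        have hut' : u ≤ t := by omega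
        have huT : u + 1 ≤ T := by omega
        have ihh := ih hut'
        rw [Finset.sum_Icc_succ_top (by omega : 1 ≤ u + 1),
          Finset.sum_Icc_succ_top (by omega : 1 ≤ u + 1)]
        have e1 := hid (u + 1) (by omega) huT
        have hNu : N u = shat (u + 1) := (hN u hu (by omega)).symm
        rw [hNu] at ihh
        have hc : Real.sqrt (G u) ≤ Real.sqrt (G (u + 1)) :=
          Real.sqrt_le_sqrt (hGmono u (u + 1) (by omega))
        have hc0 : (0:ℝ) ≤ Real.sqrt (G u) := Real.sqrt_nonneg _
        have hA0 : (0:ℝ) ≤ (shat (u + 1) - s) ^ 2 := sq_nonneg _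
        have hAM : (shat (u + 1) - s) ^ 2 ≤ M := hsqM (u + 1) (by omega) huT
        have h2η : (0:ℝ) < 2 * η := by linarith
        have q1 : (Real.sqrt (G (u+1)) - Real.sqrt (G u)) * (shat (u + 1) - s) ^ 2
            ≤ (Real.sqrt (G (u+1)) - Real.sqrt (G u)) * M :=
          mul_le_mul_of_nonneg_left hAM (by linarith)
        have q2 : (Real.sqrt (G (u+1)) - Real.sqrt (G u)) * (shat (u + 1) - s) ^ 2 / (2 * η)
            ≤ (Real.sqrt (G (u+1)) - Real.sqrt (G u)) * M / (2 * η) :=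
          by gcongr
        have q3 : (Real.sqrt (G (u+1)) - Real.sqrt (G u)) * (shat (u + 1) - s) ^ 2 / (2 * η)
            = Real.sqrt (G (u+1)) * (shat (u + 1) - s) ^ 2 / (2 * η)
              - Real.sqrt (G u) * (shat (u + 1) - s) ^ 2 / (2 * η) := by ring
        have q4 : (Real.sqrt (G (u+1)) - Real.sqrt (G u)) * M / (2 * η)
            = Real.sqrt (G (u+1)) * M / (2 * η) - Real.sqrt (G u) * M / (2 * η) := by ring
        have q5 : (η / 2) * (∑ τ ∈ Finset.Icc 1 u, (err τ - α) ^ 2 / Real.sqrt (G τ)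
              + (err (u+1) - α) ^ 2 / Real.sqrt (G (u+1)))
            = (η / 2) * ∑ τ ∈ Finset.Icc 1 u, (err τ - α) ^ 2 / Real.sqrt (G τ)
              + (η / 2) * ((err (u+1) - α) ^ 2 / Real.sqrt (G (u+1))) := by ring
        have q6 : Real.sqrt (G (u+1)) / (2 * η) *
              ((shat (u+1) - s) ^ 2 - (N (u+1) - s) ^ 2)
            = Real.sqrt (G (u+1)) * (shat (u+1) - s) ^ 2 / (2 * η)
              - Real.sqrt (G (u+1)) * (N (u+1) - s) ^ 2 / (2 * η) := by ring
        rw [q5]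
        linarith [e1, ihh, q2, q3, q4, q6]
    -- put it together
    have hmt := main t ht1 le_rfl
    have hratio : (∑ τ ∈ Finset.Icc 1 t, (err τ - α) ^ 2 / Real.sqrt (G τ))
        ≤ 2 * Real.sqrt (G t) := by
      have h := ratio_sum_le (fun τ => (err τ - α) ^ 2) (fun i => sq_nonneg _) t
      simp only [← hGa] at h
      exact h
    have hsub : (∑ τ ∈ Finset.Icc 1 t, pinball α (S τ) (shat τ)) -
        (∑ τ ∈ Finset.Icc 1 t, pinball α (S τ) s)
        ≤ ∑ τ ∈ Finset.Icc 1 t, (α - err τ) * (shat τ - s) := by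
      rw [← Finset.sum_sub_distrib]
      apply Finset.sum_le_sum
      intro τ hτ
      obtain ⟨h1, h2⟩ := Finset.mem_Icc.mp hτ
      exact pinball_subgrad α (S τ) (shat τ) s (err τ) hα0.le hα1.le
        (herr τ h1 (le_trans h2 htT))
    have hrt0 : (0:ℝ) ≤ Real.sqrt (G t) := Real.sqrt_nonneg _
    have hNt0 : (0:ℝ) ≤ Real.sqrt (G t) * (N t - s) ^ 2 / (2 * η) := by positivity
    have hcoef : M / (2 * η) + η = (s3 + 1) * D := by
      rw [hMdef, hηdef]
      field_simp
      linear_combination (-1) * hs3sq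
    have hfin : Real.sqrt (G t) * M / (2 * η) + η * Real.sqrt (G t)
        = (s3 + 1) * D * Real.sqrt (G t) := by
      have : Real.sqrt (G t) * M / (2 * η) + η * Real.sqrt (G t)
          = (M / (2 * η) + η) * Real.sqrt (G t) := by ring
      rw [this, hcoef]
    have hratio' : (η / 2) * ∑ τ ∈ Finset.Icc 1 t, (err τ - α) ^ 2 / Real.sqrt (G τ)
        ≤ η * Real.sqrt (G t) := by
      have hη2 : (0:ℝ) ≤ η / 2 := by linarith
      have h3 := mul_le_mul_of_nonneg_left hratio hη2
      have h4 : (η / 2) * (2 * Real.sqrt (G t)) = η * Real.sqrt (G t) := by ring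
      linarith
    linarith [hsub, hmt, hNt0, hratio', hfin.ge, hfin.le]
  constructor
  · rw [sub_le_comm]
    apply le_ciInf
    intro s
    have hclamp : ∀ τ ∈ Finset.Icc 1 t, pinball α (S τ) (max 0 (min s D)) ≤ pinball α (S τ) s := by
      intro τ hτ
      obtain ⟨h1, h2⟩ := Finset.mem_Icc.mp hτ
      obtain ⟨hS0, hSD⟩ := hS τ (Finset.mem_Icc.mpr ⟨h1, le_trans h2 htT⟩)
      exact pinball_clamp α (S τ) s D hα0.le hα1.le hS0 hSD
    have hmem : max 0 (min s D) ∈ Set.Icc (0:ℝ) D := by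
      constructor
      · exact le_max_left _ _
      · apply max_le hD.le (le_trans (min_le_right _ _) le_rfl)
    have hk := key _ hmem
    have hsum : (∑ τ ∈ Finset.Icc 1 t, pinball α (S τ) (max 0 (min s D)))
        ≤ ∑ τ ∈ Finset.Icc 1 t, pinball α (S τ) s := Finset.sum_le_sum hclamp
    linarith
  · have hGt : G t ≤ (t : ℝ) := by
      rw [hGa t]
      calc ∑ τ ∈ Finset.Icc 1 t, (err τ - α) ^ 2
          ≤ ∑ τ ∈ Finset.Icc 1 t, (1:ℝ) := by
            apply Finset.sum_le_sum
            intro τ hτ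
            obtain ⟨h1, h2⟩ := Finset.mem_Icc.mp hτ
            rcases herr01 τ h1 (le_trans h2 htT) with h | h <;> rw [h] <;> nlinarith
        _ = (t : ℝ) := by simp
    have hsq : Real.sqrt (G t) ≤ Real.sqrt t := by
      apply Real.sqrt_le_sqrt
      exact hGt
    apply mul_le_mul_of_nonneg_left hsq
    have hs3' : 0 ≤ s3 := hs3.le
    positivity
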